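/- Let $X$ be a Banach space and let $f_n : X \to \mathbb{R} \cup \{\infty\}$ be a sequence of lower semicontinuous proper convex functions. Define $f := \Gamma\text{-}\liminf_n f_n$ (the lower sequential $\Gamma$-limit with respect to the norm topology). Then for every $x^* \in X^*$, $f^*(x^*) \leq \Gamma(w^*)\text{-}\limsup_n f_n^*(x^*)$, where the right-hand side is the upper sequential $\Gamma$-limit of the Fenchel conjugates with respect to the weak-star topology. -/
import Mathlib


open Filter Topology

noncomputable section

variable {X : Type*} [NormedAddCommGroup X] [NormedSpace ℝ X]

/-- Fenchel conjugate of `f : X → EReal`, as a function on the dual. -/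
def fconj (f : X → EReal) (p : X →L[ℝ] ℝ) : EReal :=
  ⨆ x : X, ((p x : ℝ) : EReal) - f x

/-- `f` is a proper convex lower semicontinuous function with values in `ℝ ∪ {∞}`. -/
def IsPLC (f : X → EReal) : Prop :=
  (∃ x, f x ≠ ⊤) ∧ (∀ x, f x ≠ ⊥) ∧
    Convex ℝ {q : X × ℝ | f q.1 ≤ (q.2 : EReal)} ∧ LowerSemicontinuous f

/-- Sequential Γ-liminf in the norm topology. -/
def gLiminf (f : ℕ → X → EReal) (x : X) : EReal :=
  ⨅ (u : ℕ → X) (_ : Tendsto u atTop (𝓝 x)), liminf (fun n => f n (u n)) atTop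

/-- Sequential Γ-limsup in the norm topology. -/
def gLimsup (f : ℕ → X → EReal) (x : X) : EReal :=
  ⨅ (u : ℕ → X) (_ : Tendsto u atTop (𝓝 x)), limsup (fun n => f n (u n)) atTop

/-- Weak-star convergence of a sequence of continuous linear functionals. -/
def WStarTendsto (u : ℕ → X →L[ℝ] ℝ) (p : X →L[ℝ] ℝ) : Prop :=
  ∀ x : X, Tendsto (fun n => u n x) atTop (𝓝 (p x))

/-- Sequential Γ-liminf in the weak-star topology of the dual. -/
def gLiminfW (g : ℕ → (X →L[ℝ] ℝ) → EReal) (p : X →L[ℝ] ℝ) : EReal :=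
  ⨅ (u : ℕ → X →L[ℝ] ℝ) (_ : WStarTendsto u p), liminf (fun n => g n (u n)) atTop

/-- Sequential Γ-limsup in the weak-star topology of the dual. -/
def gLimsupW (g : ℕ → (X →L[ℝ] ℝ) → EReal) (p : X →L[ℝ] ℝ) : EReal :=
  ⨅ (u : ℕ → X →L[ℝ] ℝ) (_ : WStarTendsto u p), limsup (fun n => g n (u n)) atTop

/-- Graph of the convex subdifferential. -/
def subdiff (f : X → EReal) : Set (X × (X →L[ℝ] ℝ)) :=
  {q | f q.1 + fconj f q.2 = ((q.2 q.1 : ℝ) : EReal)}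

/-- Graph of the Fenchel subdifferential of an arbitrary function. -/
def fenSubdiff (g : X → EReal) : Set (X × (X →L[ℝ] ℝ)) :=
  {q | g q.1 ≠ ⊤ ∧ ∀ u : X, ((q.2 u - q.2 q.1 : ℝ) : EReal) + g q.1 ≤ g u}

/-- Moreau envelope. -/
def moreau (f : X → EReal) (lam : ℝ) (x : X) : EReal :=
  ⨅ y : X, f y + ((1 / (2 * lam) * ‖x - y‖ ^ 2 : ℝ) : EReal)


lemma sub_le_comm' (c : ℝ) (y L : EReal) : (c : EReal) - y ≤ L ↔ (c : EReal) - L ≤ y := by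
  induction y with
  | bot =>
    induction L with
    | bot => simp
    | top => simp [EReal.sub_top, EReal.sub_bot]
    | coe L => simp [EReal.sub_bot, ← EReal.coe_sub]
  | top =>
    induction L with
    | bot => simp [EReal.sub_top]
    | top => simp [EReal.sub_top]
    | coe L => simp [EReal.sub_top, ← EReal.coe_sub]
  | coe y =>
    induction L with
    | bot => simp [EReal.sub_bot, ← EReal.coe_sub]
    | top => simp [EReal.sub_top]
    | coe L =>
      rw [← EReal.coe_sub, ← EReal.coe_sub, EReal.coe_le_coe_iff, EReal.coe_le_coe_iff]
      constructor <;> intro h <;> linarith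

/-- The conjugate of the Γ-liminf is dominated by the weak-star Γ-limsup of the
conjugates. -/
theorem stmt1 {X : Type*} [NormedAddCommGroup X] [NormedSpace ℝ X] [CompleteSpace X]
    (f : ℕ → X → EReal) (hf : ∀ n, IsPLC (f n)) :
    ∀ p : X →L[ℝ] ℝ,
      fconj (fun x => gLiminf f x) p ≤ gLimsupW (fun n => fconj (f n)) p := by
  intro p
  rw [fconj]
  apply iSup_le
  intro x
  rw [gLimsupW]
  apply le_iInf₂
  intro v hv
  -- Banach–Steinhaus: the sequence v is uniformly bounded
  obtain ⟨C, hC⟩ : ∃ C, ∀ n, ‖v n‖ ≤ C := by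
    apply banach_steinhaus
    intro z
    have hb : BddAbove (Set.range fun n => ‖v n z‖) :=
      ((hv z).norm).bddAbove_range
    obtain ⟨C, hC⟩ := hb
    exact ⟨C, fun n => hC ⟨n, rfl⟩⟩
  set L : EReal := limsup (fun n => fconj (f n) (v n)) atTop with hLdef
  rw [sub_le_comm']
  rw [gLiminf]
  apply le_iInf₂
  intro u hu
  rw [← sub_le_comm']
  -- key convergence: v n (u n) → p x
  have hkey : Tendsto (fun n => v n (u n)) atTop (𝓝 (p x)) := by
    have h1 : Tendsto (fun n => v n (u n) - v n x) atTop (𝓝 0) := by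
      have hbd : ∀ n, ‖v n (u n) - v n x‖ ≤ C * ‖u n - x‖ := by
        intro n
        calc ‖v n (u n) - v n x‖ = ‖v n (u n - x)‖ := by rw [map_sub]
          _ ≤ ‖v n‖ * ‖u n - x‖ := (v n).le_opNorm _
          _ ≤ C * ‖u n - x‖ := by
              apply mul_le_mul_of_nonneg_right (hC n) (norm_nonneg _)
      have htnd : Tendsto (fun n => C * ‖u n - x‖) atTop (𝓝 0) := by
        have := (tendsto_iff_norm_sub_tendsto_zero.1 hu)
        simpa using (this.const_mul C)
      exact squeeze_zero_norm hbd htnd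
    have h2 := hv x
    have := h1.add h2
    simpa using this
  -- pass to EReal
  have hkeyE : Tendsto (fun n => ((v n (u n) : ℝ) : EReal)) atTop (𝓝 ((p x : ℝ) : EReal)) :=
    (continuous_coe_real_ereal.tendsto _).comp hkey
  have hliminf_a : liminf (fun n => ((v n (u n) : ℝ) : EReal)) atTop = ((p x : ℝ) : EReal) :=
    hkeyE.liminf_eq
  have hlimsup_b : limsup (fun n => -(f n (u n))) atTop = -liminf (fun n => f n (u n)) atTop := by
    have := EReal.limsup_neg (f := atTop) (v := fun n => f n (u n))
    simpa [Pi.neg_def] using this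
  calc ((p x : ℝ) : EReal) - liminf (fun n => f n (u n)) atTop
      = limsup (fun n => -(f n (u n))) atTop + liminf (fun n => ((v n (u n) : ℝ) : EReal)) atTop := by
        rw [hlimsup_b, hliminf_a, sub_eq_add_neg, add_comm]
    _ ≤ limsup (fun n => -(f n (u n)) + ((v n (u n) : ℝ) : EReal)) atTop := by
        have := EReal.le_limsup_add (f := atTop) (u := fun n => -(f n (u n)))
          (v := fun n => ((v n (u n) : ℝ) : EReal))
        simpa [Pi.add_def] using this
    _ = limsup (fun n => ((v n (u n) : ℝ) : EReal) - f n (u n)) atTop := by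
        congr 1
        funext n
        rw [sub_eq_add_neg, add_comm]
    _ ≤ L := by
        apply limsup_le_limsup
        · apply Eventually.of_forall
          intro n
          exact le_iSup (fun z => ((v n z : ℝ) : EReal) - f n z) (u n)
        · isBoundedDefault
        · isBoundedDefault
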